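/- Every F_{q^m}-linear MRD code of length n ≤ m and dimension k ≥ 1 over F_{q^m} contains at least q^{m(k-1)} codewords of F_q-rank equal to n. Consequently, such a code has a basis consisting of codewords of full F_q-rank n. -/

import Mathlib

/-- The `F_q`-rank of a vector over an extension field: the dimension over `F_q` of the
`F_q`-span of its coordinates (equivalently, the rank of its matrix expansion over `F_q`). -/
noncomputable def rankq (Fq : Type) {Fqm : Type} [Field Fq] [Field Fqm] [Algebra Fq Fqm]
    {n : ℕ} (v : Fin n → Fqm) : ℕ :=
  Module.finrank Fq (Submodule.span Fq (Set.range v))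

/-- Every `F_{q^m}`-linear MRD code of length `n ≤ m` and dimension `k ≥ 1`
contains at least `q^{m(k-1)}` codewords of full `F_q`-rank `n`, and consequently has a
basis consisting of codewords of full `F_q`-rank `n`. -/
theorem mrd_basis_of_full_rank_codewords (q m n k : ℕ)
    (Fq Fqm : Type) [Field Fq] [Fintype Fq] [Field Fqm] [Algebra Fq Fqm]
    (hcard : Fintype.card Fq = q) (hfin : Module.finrank Fq Fqm = m)
    (hn : 0 < n) (hnm : n ≤ m) (hk : 1 ≤ k) (hkn : k ≤ n)
    (C : Submodule Fqm (Fin n → Fqm)) (hdim : Module.finrank Fqm C = k)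
    (hMRD : ∀ c ∈ C, c ≠ 0 → n - k + 1 ≤ rankq Fq c) :
    q ^ (m * (k - 1)) ≤ Nat.card {c : C // rankq Fq (c : Fin n → Fqm) = n} ∧
    ∃ b : Module.Basis (Fin k) Fqm C, ∀ i, rankq Fq ((b i : Fin n → Fqm)) = n := by
  classical
  have hq2 : 2 ≤ q := hcard ▸ Fintype.one_lt_card
  have hm0 : 0 < m := lt_of_lt_of_le hn hnm
  have hfdq : FiniteDimensional Fq Fqm := .of_finrank_pos (by rw [hfin]; exact hm0)
  have hfinFqm : Finite Fqm := Module.finite_of_finite Fq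
  have instFqm : Fintype Fqm := Fintype.ofFinite Fqm
  have hcardFqm : Fintype.card Fqm = q ^ m := by
    rw [Module.card_eq_pow_finrank (K := Fq) (V := Fqm), hcard, hfin]
  have hfdC : FiniteDimensional Fqm C := .of_finrank_pos (by rw [hdim]; omega)
  have instC : Fintype C := Fintype.ofFinite C
  have hcardC : Fintype.card C = q ^ (m * k) := by
    rw [Module.card_eq_pow_finrank (K := Fqm) (V := C), hcardFqm, hdim, ← pow_mul]
  -- rank of the zero codeword is zero
  have hrank0 : rankq Fq ((0 : C) : Fin n → Fqm) = 0 := by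
    unfold rankq
    have hsub : Set.range ((0 : C) : Fin n → Fqm) ⊆ {0} := by
      rintro x ⟨i, rfl⟩; rfl
    have h1 : Submodule.span Fq (Set.range ((0 : C) : Fin n → Fqm)) ≤ ⊥ := by
      rw [← Submodule.span_zero_singleton Fq]
      exact Submodule.span_mono hsub
    rw [le_bot_iff.mp h1]
    simp
  -- the linear functional attached to `l : Fin n → Fq`
  set φ : (Fin n → Fq) → (C →ₗ[Fqm] Fqm) := fun l =>
    ∑ i, algebraMap Fq Fqm (l i) • ((LinearMap.proj i).comp C.subtype) with hφ
  have hφ_apply : ∀ (l : Fin n → Fq) (c : C),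
      φ l c = ∑ i, algebraMap Fq Fqm (l i) * (c : Fin n → Fqm) i := by
    intro l c
    simp only [hφ, LinearMap.sum_apply, LinearMap.smul_apply, LinearMap.comp_apply,
      LinearMap.proj_apply, Submodule.subtype_apply, smul_eq_mul]
  -- each nonzero functional is nonzero on C
  have hφ_ne : ∀ l : Fin n → Fq, l ≠ 0 → φ l ≠ 0 := by
    intro l hl h0
    obtain ⟨j, hj⟩ : ∃ j, l j ≠ 0 := by
      by_contra h; push_neg at h; exact hl (funext h)
    obtain ⟨S, hSsub, hScard⟩ : ∃ S ⊆ (Finset.univ.erase j), S.card = k - 1 := by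
      apply Finset.exists_subset_card_eq
      rw [Finset.card_erase_of_mem (Finset.mem_univ j), Finset.card_univ, Fintype.card_fin]
      omega
    have hjS : j ∉ S := fun h => (Finset.mem_erase.mp (hSsub h)).1 rfl
    set ψ : C →ₗ[Fqm] (S → Fqm) :=
      (LinearMap.funLeft Fqm Fqm (fun i : S => (i : Fin n))).comp C.subtype with hψ
    have hker : LinearMap.ker ψ ≠ ⊥ := by
      intro hker
      have hinj := LinearMap.ker_eq_bot.mp hker
      have := LinearMap.finrank_le_finrank_of_injective hinj
      rw [hdim, Module.finrank_pi, Fintype.card_coe, hScard] at this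
      omega
    obtain ⟨c, hcker, hc0⟩ := (Submodule.ne_bot_iff _).mp hker
    set v : Fin n → Fqm := (c : Fin n → Fqm) with hv
    have hcS : ∀ i ∈ S, v i = 0 := by
      intro i hi
      have h1 : ψ c = 0 := hcker
      have h2 := congrFun h1 ⟨i, hi⟩
      simpa [hψ, LinearMap.funLeft] using h2
    set T : Finset (Fin n) := (insert j S)ᶜ with hT
    have hTcard : T.card = n - k := by
      rw [hT, Finset.card_compl, Finset.card_insert_of_notMem hjS, hScard,
        Fintype.card_fin]
      omega
    have hsum : ∑ i, algebraMap Fq Fqm (l i) * v i = 0 := by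
      have h := hφ_apply l c
      rw [h0] at h
      simpa [hv] using h.symm
    have hvj : v j = ∑ i ∈ Finset.univ.erase j, ((-(l j)⁻¹ * l i) • v i) := by
      have halg : (algebraMap Fq Fqm) (l j) ≠ 0 := fun h =>
        hj ((algebraMap Fq Fqm).injective (by rw [h, map_zero]))
      have hsplit : algebraMap Fq Fqm (l j) * v j
          + ∑ i ∈ Finset.univ.erase j, algebraMap Fq Fqm (l i) * v i = 0 := by
        rw [Finset.add_sum_erase _ (fun i => algebraMap Fq Fqm (l i) * v i)
          (Finset.mem_univ j)]
        exact hsum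
      have hexp : ∀ i, ((-(l j)⁻¹ * l i) • v i)
          = -(algebraMap Fq Fqm (l j))⁻¹ * (algebraMap Fq Fqm (l i) * v i) := by
        intro i
        rw [Algebra.smul_def, map_mul, map_neg, map_inv₀]
        ring
      rw [Finset.sum_congr rfl (fun i _ => hexp i), ← Finset.mul_sum,
        eq_neg_of_add_eq_zero_right hsplit, neg_mul_neg, inv_mul_cancel_left₀ halg]
    have hspan : Submodule.span Fq (Set.range v)
        ≤ Submodule.span Fq (v '' (T : Set (Fin n))) := by
      rw [Submodule.span_le]
      rintro x ⟨i, rfl⟩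
      by_cases hiT : i ∈ T
      · exact Submodule.subset_span ⟨i, Finset.mem_coe.mpr hiT, rfl⟩
      · have hiT' : i ∈ insert j S := by
          simp only [hT, Finset.mem_compl, not_not] at hiT
          exact hiT
        rcases Finset.mem_insert.mp hiT' with hij | hiS
        · rw [hij, hvj]
          apply Submodule.sum_mem
          intro i' hi'
          by_cases hiT2 : i' ∈ T
          · exact Submodule.smul_mem _ _
              (Submodule.subset_span ⟨i', Finset.mem_coe.mpr hiT2, rfl⟩)
          · have h3 : i' ∈ insert j S := by
              simp only [hT, Finset.mem_compl, not_not] at hiT2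
              exact hiT2
            rcases Finset.mem_insert.mp h3 with h | h
            · exact absurd h (Finset.mem_erase.mp hi').1
            · rw [hcS i' h]; simp
        · rw [hcS i hiS]; simp
    have hrank : rankq Fq v ≤ n - k := by
      have h1 : rankq Fq v ≤ Module.finrank Fq (Submodule.span Fq (v '' (T : Set (Fin n)))) :=
        Submodule.finrank_mono hspan
      have h2 : Module.finrank Fq (Submodule.span Fq ((T.image v : Finset Fqm) : Set Fqm))
          ≤ (T.image v).card := finrank_span_finset_le_card _
      rw [Finset.coe_image] at h2
      calc rankq Fq v ≤ _ := h1
        _ ≤ (T.image v).card := h2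
        _ ≤ T.card := Finset.card_image_le
        _ = n - k := hTcard
    have hvne : v ≠ 0 := fun h => hc0 (Subtype.ext h)
    have hge := hMRD v c.2 hvne
    have := le_trans hge hrank
    omega
  -- kernels of nonzero functionals have exactly q^(m*(k-1)) elements
  have hker_card : ∀ l : Fin n → Fq, l ≠ 0 →
      Fintype.card (LinearMap.ker (φ l)) = q ^ (m * (k - 1)) := by
    intro l hl
    have hne := hφ_ne l hl
    have hrange : LinearMap.range (φ l) = ⊤ := by
      rcases LinearMap.surjective_or_eq_zero (φ l) with h | h
      · exact LinearMap.range_eq_top.mpr h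
      · exact absurd h hne
    have hrk : Module.finrank Fqm (LinearMap.range (φ l)) = 1 := by
      rw [hrange]; simpa using Module.finrank_self Fqm
    have hadd := LinearMap.finrank_range_add_finrank_ker (φ l)
    rw [hrk, hdim] at hadd
    have hkerrk : Module.finrank Fqm (LinearMap.ker (φ l)) = k - 1 := by omega
    rw [Module.card_eq_pow_finrank (K := Fqm), hcardFqm, hkerrk, ← pow_mul]
  -- linear independence over Fq gives full rank
  have hrank_indep : ∀ v : Fin n → Fqm, LinearIndependent Fq v → rankq Fq v = n := by
    intro v hv
    have h := finrank_span_eq_card hv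
    rw [Fintype.card_fin] at h
    exact h
  -- rank-deficient codewords lie in some kernel
  have hbad : ∀ c : C, rankq Fq (c : Fin n → Fqm) ≠ n →
      ∃ l : Fin n → Fq, l ≠ 0 ∧ c ∈ LinearMap.ker (φ l) := by
    intro c hc
    have hdep : ¬ LinearIndependent Fq ((c : Fin n → Fqm)) := fun h => hc (hrank_indep _ h)
    obtain ⟨g, hgsum, i, hgi⟩ := Fintype.not_linearIndependent_iff.mp hdep
    refine ⟨g, fun h => hgi (by rw [h]; rfl), ?_⟩
    rw [LinearMap.mem_ker, hφ_apply, ← hgsum]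
    exact Finset.sum_congr rfl fun i _ => (Algebra.smul_def _ _).symm
  -- counting
  set Full : Finset C := Finset.univ.filter (fun c => rankq Fq (c : Fin n → Fqm) = n) with hFull
  set Bad : Finset C := Finset.univ.filter (fun c => ¬ rankq Fq (c : Fin n → Fqm) = n) with hBad
  have hBadsub : Bad ⊆ (Finset.univ.filter (fun l : Fin n → Fq => l ≠ 0)).biUnion
      (fun l => Finset.univ.filter (fun c : C => c ∈ LinearMap.ker (φ l))) := by
    intro c hc
    rw [hBad, Finset.mem_filter] at hc
    obtain ⟨l, hl, hcl⟩ := hbad c hc.2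
    rw [Finset.mem_biUnion]
    refine ⟨l, by simp [hl], ?_⟩
    rw [Finset.mem_filter]
    exact ⟨Finset.mem_univ c, hcl⟩
  have hBadcard : Bad.card ≤ (q ^ n - 1) * q ^ (m * (k - 1)) := by
    calc Bad.card ≤ _ := Finset.card_le_card hBadsub
      _ ≤ ∑ l ∈ Finset.univ.filter (fun l : Fin n → Fq => l ≠ 0),
            (Finset.univ.filter (fun c : C => c ∈ LinearMap.ker (φ l))).card :=
          Finset.card_biUnion_le
      _ ≤ ∑ _l ∈ Finset.univ.filter (fun l : Fin n → Fq => l ≠ 0), q ^ (m * (k - 1)) := by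
          apply Finset.sum_le_sum
          intro l hl
          rw [Finset.mem_filter] at hl
          have h1 : (Finset.univ.filter (fun c : C => c ∈ LinearMap.ker (φ l))).card
              = Fintype.card {c : C // c ∈ LinearMap.ker (φ l)} :=
            (Fintype.card_subtype _).symm
          rw [h1, ← hker_card l hl.2]
      _ = (Finset.univ.filter (fun l : Fin n → Fq => l ≠ 0)).card * q ^ (m * (k - 1)) := by
          rw [Finset.sum_const, smul_eq_mul]
      _ ≤ (q ^ n - 1) * q ^ (m * (k - 1)) := by
          apply Nat.mul_le_mul_right
          have h2 : (Finset.univ.filter (fun l : Fin n → Fq => l ≠ 0)).card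
              = Fintype.card (Fin n → Fq) - 1 := by
            rw [Finset.filter_ne', Finset.card_erase_of_mem (Finset.mem_univ 0),
              Finset.card_univ]
          rw [h2, Fintype.card_fun, hcard, Fintype.card_fin]
  have hFullBad : Full.card + Bad.card = q ^ (m * k) := by
    rw [hFull, hBad, Finset.card_filter_add_card_filter_not, Finset.card_univ, hcardC]
  have hpow : q ^ (n + m * (k - 1)) ≤ q ^ (m * k) := by
    apply Nat.pow_le_pow_right (by omega)
    have hmk : m * k = m * (k - 1) + m := by
      conv_lhs => rw [show k = (k - 1) + 1 by omega]
      rw [Nat.mul_succ]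
    rw [hmk, Nat.add_comm]
    exact Nat.add_le_add_left hnm _
  have hABsum : (q ^ n - 1) * q ^ (m * (k - 1)) + q ^ (m * (k - 1))
      = q ^ n * q ^ (m * (k - 1)) := by
    rw [Nat.sub_one_mul]
    exact Nat.sub_add_cancel (Nat.le_mul_of_pos_left _ (by positivity))
  have hFullcard : q ^ (m * (k - 1)) ≤ Full.card := by
    have h1 : Bad.card + q ^ (m * (k - 1)) ≤ q ^ (m * k) :=
      calc Bad.card + q ^ (m * (k - 1))
          ≤ (q ^ n - 1) * q ^ (m * (k - 1)) + q ^ (m * (k - 1)) :=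
            Nat.add_le_add_right hBadcard _
        _ = q ^ n * q ^ (m * (k - 1)) := hABsum
        _ = q ^ (n + m * (k - 1)) := (pow_add q n _).symm
        _ ≤ q ^ (m * k) := hpow
    have h2 : Full.card = q ^ (m * k) - Bad.card := by
      rw [← hFullBad, Nat.add_sub_cancel]
    rw [h2]
    exact Nat.le_sub_of_add_le (by rw [Nat.add_comm]; exact h1)
  have hNatcard : Nat.card {c : C // rankq Fq (c : Fin n → Fqm) = n} = Full.card := by
    rw [Nat.card_eq_fintype_card, Fintype.card_subtype]
  constructor
  · rw [hNatcard]; exact hFullcard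
  · -- the full-rank codewords span C
    set F : Set C := {c : C | rankq Fq (c : Fin n → Fqm) = n} with hF
    have hspanF : Submodule.span Fqm F = ⊤ := by
      by_contra hne
      have hlt : Submodule.span Fqm F < ⊤ := lt_top_iff_ne_top.mpr hne
      have hrk : Module.finrank Fqm (Submodule.span Fqm F) < k := by
        rw [← hdim]; exact Submodule.finrank_lt hne
      have instW : Fintype (Submodule.span Fqm F) := Fintype.ofFinite _
      have hWcard : Fintype.card (Submodule.span Fqm F) ≤ q ^ (m * (k - 1)) := by
        rw [Module.card_eq_pow_finrank (K := Fqm), hcardFqm, ← pow_mul]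
        exact Nat.pow_le_pow_right (by omega) (Nat.mul_le_mul_left m (by omega))
      have hsub : Full ⊆ ((Submodule.span Fqm F : Set C).toFinset.erase 0) := by
        intro c hc
        rw [hFull, Finset.mem_filter] at hc
        refine Finset.mem_erase.mpr ⟨?_, ?_⟩
        · rintro rfl
          rw [hrank0] at hc
          omega
        · rw [Set.mem_toFinset]
          exact Submodule.subset_span hc.2
      have h0mem : (0 : C) ∈ (Submodule.span Fqm F : Set C).toFinset := by
        rw [Set.mem_toFinset]
        exact Submodule.zero_mem _
      have h1 := Finset.card_le_card hsub
      rw [Finset.card_erase_of_mem h0mem] at h1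
      have hbridge : (Submodule.span Fqm F : Set C).toFinset.card
          = Fintype.card (Submodule.span Fqm F) := by
        rw [Set.toFinset_card]
        exact Fintype.card_congr (Equiv.refl _)
      rw [hbridge] at h1
      have hne0 : Nonempty (Submodule.span Fqm F) := ⟨0⟩
      have h2 : 1 ≤ Fintype.card (Submodule.span Fqm F) := Fintype.card_pos
      omega
    obtain ⟨t, htF, htspan, htind⟩ := exists_linearIndependent Fqm F
    rw [hspanF] at htspan
    have htfin : t.Finite := Set.Finite.subset Set.finite_univ (Set.subset_univ t)
    have instT : Fintype t := htfin.fintype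
    let bt : Module.Basis t Fqm C := Module.Basis.mk htind
      (by rw [show Set.range (fun x : t => (x : C)) = t from Subtype.range_coe, htspan])
    have hcardt : Fintype.card t = k := by
      have h := Module.finrank_eq_card_basis bt
      rw [hdim] at h
      omega
    let e : t ≃ Fin k := Fintype.equivFinOfCardEq hcardt
    refine ⟨bt.reindex e, fun i => ?_⟩
    have h1 : bt.reindex e i = bt (e.symm i) := Module.Basis.reindex_apply bt e i
    have h2 : bt (e.symm i) = ((e.symm i : C)) := Module.Basis.mk_apply htind _ _
    rw [h1, h2]
    exact htF (e.symm i).2
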